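/- arXiv:1808.04883 — 4 statements merged into one kernel-verified Lean document; each statement's English description precedes it below -/
import Mathlib

section
/- Consensus-violation recursion: along the CoLa iterates (for which (1/K)Σ_k v_k^t = A x^t), the consensus violation satisfies, for every round t, Σ_{k=1}^K ‖v_k^{t+1} − A x^{t+1}‖² ≤ β Σ_{k=1}^K ‖v_k^t − A x^t‖² + (1−β) c₁(β,γ,K) Σ_{k=1}^K ‖Δv_k^t‖², where c₁(β,γ,K) := γ²K²/(1−β)² and Δv_k^t = A_{[k]} Δx_{[k]}^t is the round-t update at node k. -/
open scoped RealInnerProductSpace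
open Finset

noncomputable section

/-- The matrix–vector product `A x`, viewed in Euclidean space. -/
def mulVecE {d n : ℕ} (A : Matrix (Fin d) (Fin n) ℝ) (x : EuclideanSpace ℝ (Fin n)) :
    EuclideanSpace ℝ (Fin d) :=
  (WithLp.equiv 2 (Fin d → ℝ)).symm (A.mulVec (WithLp.equiv 2 (Fin n → ℝ) x))

/-- `x_{[k]}`: the restriction of `x` to the coordinates owned by node `k`
(the block of the partition `P`), with all other coordinates set to `0`. -/
def restr {n K : ℕ} (P : Fin n → Fin K) (k : Fin K) (x : EuclideanSpace ℝ (Fin n)) :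
    EuclideanSpace ℝ (Fin n) :=
  (WithLp.equiv 2 (Fin n → ℝ)).symm fun i => if P i = k then x i else 0

/-- Average of a family of `K` vectors. -/
def avg {K : ℕ} {E : Type*} [AddCommMonoid E] [Module ℝ E] (w : Fin K → E) : E :=
  (K : ℝ)⁻¹ • ∑ k, w k

/-- `A_i^T w`: the inner product of the `i`-th column of `A` with `w`. -/
def colDot {d n : ℕ} (A : Matrix (Fin d) (Fin n) ℝ) (i : Fin n)
    (w : EuclideanSpace ℝ (Fin d)) : ℝ :=
  ∑ r, A r i * w r

/- ### Auxiliary lemmas -/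

lemma cola_scalar1 (β a b : ℝ) (hβ0 : 0 < β) (hβ1 : β < 1) :
    (a + b)^2 ≤ β⁻¹ * a^2 + (1-β)⁻¹ * b^2 := by
  have h1 : (0:ℝ) < 1 - β := by linarith
  rw [show β⁻¹ * a^2 = a^2/β by ring, show (1-β)⁻¹ * b^2 = b^2/(1-β) by ring,
    div_add_div _ _ (ne_of_gt hβ0) (ne_of_gt h1), le_div_iff₀ (by positivity)]
  nlinarith [sq_nonneg ((1-β)*a - β*b)]

lemma cola_scalar2 {K : ℕ} (hK : 0 < K) (z : Fin K → ℝ) :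
    ∑ k, (z k - (K:ℝ)⁻¹ * ∑ l, z l)^2 ≤ ∑ k, (z k)^2 := by
  set m : ℝ := (K:ℝ)⁻¹ * ∑ l, z l with hm
  have hKne : ((K:ℝ)) ≠ 0 := Nat.cast_ne_zero.mpr hK.ne'
  have hs : ∑ l, z l = (K:ℝ) * m := by rw [hm]; field_simp
  have expand : ∑ k, (z k - m)^2 = ∑ k, (z k)^2 - 2*m*(∑ l, z l) + (K:ℝ)*m^2 := by
    simp only [sub_sq, Finset.sum_add_distrib, Finset.sum_sub_distrib, ← Finset.sum_mul,
      ← Finset.mul_sum, Finset.sum_const, card_univ, Fintype.card_fin, nsmul_eq_mul]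
    ring
  rw [expand, hs]
  nlinarith [mul_nonneg (Nat.cast_nonneg K : (0:ℝ) ≤ K) (sq_nonneg m)]

lemma cola_mulVecE_apply {d n : ℕ} (A : Matrix (Fin d) (Fin n) ℝ)
    (y : EuclideanSpace ℝ (Fin n)) (r : Fin d) : mulVecE A y r = ∑ i, A r i * y i := rfl

lemma cola_sum_coord {d K : ℕ} (f : Fin K → EuclideanSpace ℝ (Fin d)) (r : Fin d) :
    (∑ l, f l) r = ∑ l, f l r :=
  map_sum (EuclideanSpace.proj r : EuclideanSpace ℝ (Fin d) →L[ℝ] ℝ) f Finset.univ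

lemma cola_norm_sq_coord {d : ℕ} (w : EuclideanSpace ℝ (Fin d)) : ‖w‖^2 = ∑ r, (w r)^2 := by
  rw [EuclideanSpace.norm_eq, Real.sq_sqrt (by positivity)]
  simp [sq_abs]

/-- Consensus-violation recursion along the CoLa iterates:
`∑_k ‖v_k^{t+1} − A x^{t+1}‖² ≤ β ∑_k ‖v_k^t − A x^t‖²
  + (1−β) c₁(β,γ,K) ∑_k ‖Δv_k^t‖²` with `c₁(β,γ,K) := γ²K²/(1−β)²` and
`Δv_k^t = A_{[k]} Δx_{[k]}^t`.  Here `β` bounds the spectral contraction of `W − (1/K)𝟙𝟙ᵀ`. -/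
theorem cola_consensus_violation_recursion
    {d n K : ℕ} (hK : 0 < K)
    (A : Matrix (Fin d) (Fin n) ℝ) (P : Fin n → Fin K)
    (W : Matrix (Fin K) (Fin K) ℝ)
    (hWnonneg : ∀ k l, 0 ≤ W k l) (hWsymm : ∀ k l, W k l = W l k)
    (hWrow : ∀ k, ∑ l, W k l = 1) (hWcol : ∀ l, ∑ k, W k l = 1)
    (β : ℝ) (hβ0 : 0 < β) (hβ1 : β < 1)
    (hβ : ∀ z : Fin K → ℝ,
      ∑ k, (∑ l, (W k l - (K : ℝ)⁻¹) * z l) ^ 2 ≤ β ^ 2 * ∑ k, z k ^ 2)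
    (γ : ℝ) (hγ : γ ∈ Set.Icc (0 : ℝ) 1)
    (x : ℕ → EuclideanSpace ℝ (Fin n))
    (v : ℕ → Fin K → EuclideanSpace ℝ (Fin d))
    (Δx : ℕ → Fin K → EuclideanSpace ℝ (Fin n))
    (hx0 : x 0 = 0) (hv0 : ∀ k, v 0 k = 0)
    (hvupd : ∀ t k, v (t + 1) k
        = ∑ l, W k l • v t l + (γ * K) • mulVecE A (restr P k (Δx t k)))
    (hxupd : ∀ t, x (t + 1) = x t + γ • ∑ k, restr P k (Δx t k)) :
    ∀ t, ∑ k, ‖v (t + 1) k - mulVecE A (x (t + 1))‖ ^ 2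
      ≤ β * ∑ k, ‖v t k - mulVecE A (x t)‖ ^ 2
        + (1 - β) * (γ ^ 2 * K ^ 2 / (1 - β) ^ 2)
          * ∑ k, ‖mulVecE A (restr P k (Δx t k))‖ ^ 2 := by
  have hKne : ((K:ℝ)) ≠ 0 := Nat.cast_ne_zero.mpr hK.ne'
  have h1β : (0:ℝ) < 1 - β := by linarith
  -- coordinate form of the x-update under A
  have hAx : ∀ t r, mulVecE A (x (t+1)) r
      = mulVecE A (x t) r + γ * ∑ k, mulVecE A (restr P k (Δx t k)) r := by
    intro t r
    rw [hxupd t]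
    simp only [cola_mulVecE_apply]
    have hco : ∀ i : Fin n, (x t + γ • ∑ k, restr P k (Δx t k)) i
        = x t i + γ * (∑ k, restr P k (Δx t k)) i := fun i => rfl
    simp only [hco, cola_sum_coord, mul_add, Finset.sum_add_distrib, Finset.mul_sum]
    congr 1
    rw [Finset.sum_comm]
    exact Finset.sum_congr rfl fun _ _ => Finset.sum_congr rfl fun _ _ => by ring
  -- coordinate form of the v-update
  have hvc : ∀ t k r, v (t+1) k r
      = (∑ l, W k l * v t l r) + γ * K * mulVecE A (restr P k (Δx t k)) r := by
    intro t k r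
    rw [hvupd t k]
    have hco : (∑ l, W k l • v t l + (γ * (K:ℝ)) • mulVecE A (restr P k (Δx t k))) r
        = (∑ l, W k l • v t l) r + (γ*K) * mulVecE A (restr P k (Δx t k)) r := rfl
    rw [hco, cola_sum_coord]
    rfl
  -- invariant: the average of the `v`'s equals `A x`
  have inv : ∀ t r, ∑ l, v t l r = (K:ℝ) * mulVecE A (x t) r := by
    intro t
    induction t with
    | zero => intro r; simp [hv0, hx0, cola_mulVecE_apply]
    | succ t ih =>
      intro r
      simp only [hvc t, hAx t r, Finset.sum_add_distrib]
      rw [Finset.sum_comm]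
      simp only [← Finset.sum_mul, hWcol, one_mul, ih, ← Finset.mul_sum]
      ring
  intro t
  -- the key decomposition of the new consensus violation
  have key : ∀ (k : Fin K) (r : Fin d), (v (t + 1) k - mulVecE A (x (t + 1))) r
      = (∑ l, (W k l - (K:ℝ)⁻¹) * (v t l r - mulVecE A (x t) r))
        + γ * K * (mulVecE A (restr P k (Δx t k)) r
            - (K:ℝ)⁻¹ * ∑ l, mulVecE A (restr P l (Δx t l)) r) := by
    intro k r
    have hco : (v (t + 1) k - mulVecE A (x (t + 1))) r
        = v (t+1) k r - mulVecE A (x (t+1)) r := rfl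
    rw [hco, hvc t k r, hAx t r]
    have expand : ∑ l, (W k l - (K:ℝ)⁻¹) * (v t l r - mulVecE A (x t) r)
        = (∑ l, W k l * v t l r) - (∑ l, W k l) * mulVecE A (x t) r
          - (K:ℝ)⁻¹ * (∑ l, v t l r)
          + (K:ℝ) * ((K:ℝ)⁻¹ * mulVecE A (x t) r) := by
      simp only [sub_mul, mul_sub, Finset.sum_sub_distrib, ← Finset.sum_mul, ← Finset.mul_sum,
        Finset.sum_const, card_univ, Fintype.card_fin, nsmul_eq_mul]
      ring
    rw [expand, hWrow k, inv t r]
    field_simp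
    ring
  -- bound for the mixing part, from the spectral-gap hypothesis
  have hA : ∑ k, ∑ r, (∑ l, (W k l - (K:ℝ)⁻¹) * (v t l r - mulVecE A (x t) r))^2
      ≤ β^2 * ∑ k, ‖v t k - mulVecE A (x t)‖^2 := by
    rw [Finset.sum_comm]
    calc ∑ r, ∑ k, (∑ l, (W k l - (K:ℝ)⁻¹) * (v t l r - mulVecE A (x t) r))^2
        ≤ ∑ r, β^2 * ∑ k, (v t k r - mulVecE A (x t) r)^2 :=
          Finset.sum_le_sum fun r _ => hβ fun l => v t l r - mulVecE A (x t) r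
      _ = β^2 * ∑ k, ‖v t k - mulVecE A (x t)‖^2 := by
          rw [← Finset.mul_sum, Finset.sum_comm]
          congr 1
          exact Finset.sum_congr rfl fun k _ => (cola_norm_sq_coord (v t k - mulVecE A (x t))).symm
  -- bound for the update part, from the variance bound
  have hB : ∑ k, ∑ r, (γ * K * (mulVecE A (restr P k (Δx t k)) r
        - (K:ℝ)⁻¹ * ∑ l, mulVecE A (restr P l (Δx t l)) r))^2
      ≤ γ^2 * K^2 * ∑ k, ‖mulVecE A (restr P k (Δx t k))‖^2 := by
    have hrw : ∀ (k : Fin K) (r : Fin d), (γ * K * (mulVecE A (restr P k (Δx t k)) r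
        - (K:ℝ)⁻¹ * ∑ l, mulVecE A (restr P l (Δx t l)) r))^2
        = γ^2 * K^2 * (mulVecE A (restr P k (Δx t k)) r
            - (K:ℝ)⁻¹ * ∑ l, mulVecE A (restr P l (Δx t l)) r)^2 := fun k r => by ring
    simp only [hrw, ← Finset.mul_sum]
    have hmono : ∑ k, ∑ r, (mulVecE A (restr P k (Δx t k)) r
          - (K:ℝ)⁻¹ * ∑ l, mulVecE A (restr P l (Δx t l)) r)^2
        ≤ ∑ k, ‖mulVecE A (restr P k (Δx t k))‖^2 := by
      rw [Finset.sum_comm]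
      calc ∑ r, ∑ k, (mulVecE A (restr P k (Δx t k)) r
            - (K:ℝ)⁻¹ * ∑ l, mulVecE A (restr P l (Δx t l)) r)^2
          ≤ ∑ r, ∑ k, (mulVecE A (restr P k (Δx t k)) r)^2 :=
            Finset.sum_le_sum fun r _ =>
              cola_scalar2 hK fun k => mulVecE A (restr P k (Δx t k)) r
        _ = ∑ k, ‖mulVecE A (restr P k (Δx t k))‖^2 := by
            rw [Finset.sum_comm]
            exact Finset.sum_congr rfl fun k _ => (cola_norm_sq_coord _).symm
    exact mul_le_mul_of_nonneg_left hmono (by positivity)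
  -- put everything together
  calc ∑ k, ‖v (t + 1) k - mulVecE A (x (t + 1))‖ ^ 2
      = ∑ k, ∑ r, ((∑ l, (W k l - (K:ℝ)⁻¹) * (v t l r - mulVecE A (x t) r))
          + γ * K * (mulVecE A (restr P k (Δx t k)) r
            - (K:ℝ)⁻¹ * ∑ l, mulVecE A (restr P l (Δx t l)) r))^2 := by
        refine Finset.sum_congr rfl fun k _ => ?_
        rw [cola_norm_sq_coord]
        exact Finset.sum_congr rfl fun r _ => by rw [key k r]
    _ ≤ ∑ k, ∑ r, (β⁻¹ * (∑ l, (W k l - (K:ℝ)⁻¹) * (v t l r - mulVecE A (x t) r))^2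
          + (1-β)⁻¹ * (γ * K * (mulVecE A (restr P k (Δx t k)) r
            - (K:ℝ)⁻¹ * ∑ l, mulVecE A (restr P l (Δx t l)) r))^2) :=
        Finset.sum_le_sum fun k _ => Finset.sum_le_sum fun r _ =>
          cola_scalar1 β _ _ hβ0 hβ1
    _ = β⁻¹ * (∑ k, ∑ r, (∑ l, (W k l - (K:ℝ)⁻¹) * (v t l r - mulVecE A (x t) r))^2)
          + (1-β)⁻¹ * (∑ k, ∑ r, (γ * K * (mulVecE A (restr P k (Δx t k)) r
            - (K:ℝ)⁻¹ * ∑ l, mulVecE A (restr P l (Δx t l)) r))^2) := by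
        simp only [Finset.sum_add_distrib, Finset.mul_sum]
    _ ≤ β⁻¹ * (β^2 * ∑ k, ‖v t k - mulVecE A (x t)‖^2)
          + (1-β)⁻¹ * (γ^2 * K^2 * ∑ k, ‖mulVecE A (restr P k (Δx t k))‖^2) := by
        gcongr <;> positivity
    _ = β * ∑ k, ‖v t k - mulVecE A (x t)‖ ^ 2
          + (1 - β) * (γ ^ 2 * K ^ 2 / (1 - β) ^ 2)
            * ∑ k, ‖mulVecE A (restr P k (Δx t k))‖ ^ 2 := by
        field_simp
end
end

section
/- Let Δx*_{[k]} be an exact minimizer of the local subproblem G_k^{σ'}(·; v_k, x_{[k]}), and let Δx_{[k]} be a Θ-approximate solution of the same subproblem, for each k = 1,…,K. Writing S(Δx) := Σ_{k=1}^K G_k^{σ'}(Δx_{[k]}; v_k, x_{[k]}), the updates satisfy (σ'/(4τ)) Σ_{k=1}^K ‖A_{[k]} Δx_{[k]}‖² ≤ (1+Θ) ( S(0) − S(Δx*) ) (in expectation over the randomness of the local solvers). -/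
open scoped RealInnerProductSpace
open Finset

noncomputable section

/-- The CoLa data-local quadratic subproblem
`G_k^{σ'}(Δx_{[k]}; v_k, x_{[k]}) = (1/K) f(v_k) + ∇f(v_k)^T A_{[k]} Δx_{[k]}
  + (σ'/(2τ)) ‖A_{[k]} Δx_{[k]}‖² + ∑_{i ∈ P_k} g_i(x_i + (Δx_{[k]})_i)`. -/
def subProb {d n K : ℕ} (A : Matrix (Fin d) (Fin n) ℝ) (P : Fin n → Fin K)
    (f : EuclideanSpace ℝ (Fin d) → ℝ)
    (gradf : EuclideanSpace ℝ (Fin d) → EuclideanSpace ℝ (Fin d))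
    (g : Fin n → ℝ → ℝ) (τ σ' : ℝ) (k : Fin K)
    (vk : EuclideanSpace ℝ (Fin d)) (x Δx : EuclideanSpace ℝ (Fin n)) : ℝ :=
  (K : ℝ)⁻¹ * f vk + ⟪gradf vk, mulVecE A (restr P k Δx)⟫
    + σ' / (2 * τ) * ‖mulVecE A (restr P k Δx)‖ ^ 2
    + ∑ i ∈ univ.filter fun i => P i = k, g i (x i + Δx i)

lemma L_comb {d n K : ℕ} (A : Matrix (Fin d) (Fin n) ℝ) (P : Fin n → Fin K) (k : Fin K)
    (a b : EuclideanSpace ℝ (Fin n)) (s t : ℝ) :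
    mulVecE A (restr P k (s • a + t • b))
      = s • mulVecE A (restr P k a) + t • mulVecE A (restr P k b) := by
  ext r
  simp only [mulVecE, restr, WithLp.equiv_symm_apply, PiLp.toLp_apply,
    Matrix.mulVec, dotProduct, Equiv.apply_symm_apply, PiLp.add_apply, PiLp.smul_apply, smul_eq_mul,
    mul_ite, mul_zero, mul_add, Finset.mul_sum]
  rw [← Finset.sum_add_distrib]
  apply Finset.sum_congr rfl
  intro i _
  by_cases h : P i = k <;> simp [h] <;> ring

lemma L_zero {d n K : ℕ} (A : Matrix (Fin d) (Fin n) ℝ) (P : Fin n → Fin K) (k : Fin K) :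
    mulVecE A (restr P k (0 : EuclideanSpace ℝ (Fin n))) = 0 := by
  ext r
  simp [mulVecE, restr, Matrix.mulVec, dotProduct]

lemma norm_comb_sq {d : ℕ} (u w : EuclideanSpace ℝ (Fin d)) (t : ℝ) :
    ‖(1 - t) • u + t • w‖ ^ 2
      = (1 - t) * ‖u‖ ^ 2 + t * ‖w‖ ^ 2 - t * (1 - t) * ‖u - w‖ ^ 2 := by
  have h : ∀ z : EuclideanSpace ℝ (Fin d), ‖z‖ ^ 2 = ⟪z, z⟫ := fun z => by
    rw [real_inner_self_eq_norm_sq]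
  simp only [h, inner_add_left, inner_add_right, inner_sub_left, inner_sub_right,
    real_inner_smul_left, real_inner_smul_right]
  ring_nf

/-- Convexity-plus-quadratic estimate along a segment. -/
lemma subProb_comb {d n K : ℕ} (A : Matrix (Fin d) (Fin n) ℝ) (P : Fin n → Fin K)
    (f : EuclideanSpace ℝ (Fin d) → ℝ)
    (gradf : EuclideanSpace ℝ (Fin d) → EuclideanSpace ℝ (Fin d))
    (g : Fin n → ℝ → ℝ) (hg : ∀ i, ConvexOn ℝ Set.univ (g i))
    (τ σ' : ℝ) (hτ : 0 < τ) (hσ' : 0 < σ') (k : Fin K)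
    (vk : EuclideanSpace ℝ (Fin d)) (x a b : EuclideanSpace ℝ (Fin n))
    (t : ℝ) (ht0 : 0 ≤ t) (ht1 : t ≤ 1) :
    subProb A P f gradf g τ σ' k vk x ((1 - t) • a + t • b)
      ≤ (1 - t) * subProb A P f gradf g τ σ' k vk x a
        + t * subProb A P f gradf g τ σ' k vk x b
        - σ' / (2 * τ) * (t * (1 - t) * ‖mulVecE A (restr P k a) - mulVecE A (restr P k b)‖ ^ 2) := by
  have hc : 0 ≤ σ' / (2 * τ) := by positivity
  have hL := L_comb A P k a b (1 - t) t
  unfold subProb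
  rw [hL, norm_comb_sq]
  have hinner : ⟪gradf vk, (1 - t) • mulVecE A (restr P k a) + t • mulVecE A (restr P k b)⟫
      = (1 - t) * ⟪gradf vk, mulVecE A (restr P k a)⟫
        + t * ⟪gradf vk, mulVecE A (restr P k b)⟫ := by
    simp only [inner_add_right, real_inner_smul_right]
  rw [hinner]
  have hgsum : ∑ i ∈ univ.filter fun i => P i = k, g i (x i + ((1 - t) • a + t • b) i)
      ≤ (1 - t) * ∑ i ∈ univ.filter fun i => P i = k, g i (x i + a i)
        + t * ∑ i ∈ univ.filter fun i => P i = k, g i (x i + b i) := by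
    rw [Finset.mul_sum, Finset.mul_sum, ← Finset.sum_add_distrib]
    apply Finset.sum_le_sum
    intro i _
    have := (hg i).2 (Set.mem_univ (x i + a i)) (Set.mem_univ (x i + b i))
      (by linarith : (0:ℝ) ≤ 1 - t) ht0 (by ring)
    simp only [smul_eq_mul] at this
    have harg : x i + ((1 - t) • a + t • b) i = (1 - t) * (x i + a i) + t * (x i + b i) := by
      simp [PiLp.add_apply, PiLp.smul_apply, smul_eq_mul]
      ring
    rw [harg]; exact this
  nlinarith [hgsum, mul_nonneg hc (mul_nonneg (mul_nonneg ht0 (by linarith : (0:ℝ) ≤ 1 - t)) (sq_nonneg ‖mulVecE A (restr P k a) - mulVecE A (restr P k b)‖))]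

/-- Strong convexity of the subproblem at its minimizer, w.r.t. the seminorm `‖A·‖`. -/
lemma subProb_strong {d n K : ℕ} (A : Matrix (Fin d) (Fin n) ℝ) (P : Fin n → Fin K)
    (f : EuclideanSpace ℝ (Fin d) → ℝ)
    (gradf : EuclideanSpace ℝ (Fin d) → EuclideanSpace ℝ (Fin d))
    (g : Fin n → ℝ → ℝ) (hg : ∀ i, ConvexOn ℝ Set.univ (g i))
    (τ σ' : ℝ) (hτ : 0 < τ) (hσ' : 0 < σ') (k : Fin K)
    (vk : EuclideanSpace ℝ (Fin d)) (x zs : EuclideanSpace ℝ (Fin n))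
    (hmin : ∀ z, subProb A P f gradf g τ σ' k vk x zs ≤ subProb A P f gradf g τ σ' k vk x z)
    (z : EuclideanSpace ℝ (Fin n)) :
    σ' / (2 * τ) * ‖mulVecE A (restr P k zs) - mulVecE A (restr P k z)‖ ^ 2
      ≤ subProb A P f gradf g τ σ' k vk x z - subProb A P f gradf g τ σ' k vk x zs := by
  set c := σ' / (2 * τ) with hc
  set D := ‖mulVecE A (restr P k zs) - mulVecE A (restr P k z)‖ ^ 2 with hD
  set diff := subProb A P f gradf g τ σ' k vk x z - subProb A P f gradf g τ σ' k vk x zs with hdiff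
  have hc0 : 0 < c := by rw [hc]; positivity
  have hD0 : 0 ≤ D := sq_nonneg _
  have key : ∀ t : ℝ, 0 < t → t ≤ 1 → c * ((1 - t) * D) ≤ diff := by
    intro t ht0 ht1
    have h1 := subProb_comb A P f gradf g hg τ σ' hτ hσ' k vk x zs z t (le_of_lt ht0) ht1
    have h2 := hmin ((1 - t) • zs + t • z)
    rw [← hc, ← hD] at h1
    have h3 : c * (t * (1 - t) * D) ≤ t * diff := by
      rw [hdiff]; nlinarith
    have := (mul_le_mul_iff_right₀ ht0).mp (by nlinarith : t * (c * ((1 - t) * D)) ≤ t * diff)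
    exact this
  -- pass to the limit t → 0
  have : c * D ≤ diff := by
    by_contra h
    push_neg at h
    have hdiff0 : 0 ≤ diff := by
      have := hmin z; rw [hdiff]; linarith
    have hDpos : 0 < c * D := lt_of_le_of_lt hdiff0 h
    set t := (c * D - diff) / (2 * (c * D)) with htdef
    have ht0 : 0 < t := div_pos (by linarith) (by linarith)
    have ht1 : t ≤ 1 := by
      rw [htdef, div_le_one (by linarith)]; linarith
    have hkey := key t ht0 ht1
    have hexp : c * ((1 - t) * D) = c * D - t * (c * D) := by ring
    have htv : t * (c * D) = (c * D - diff) / 2 := by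
      rw [htdef, div_mul_eq_mul_div, mul_div_mul_right _ _ (ne_of_gt hDpos)]
    rw [hexp, htv] at hkey
    linarith
  exact this

/-- If `Δx*_{[k]}` is an exact minimizer of the local subproblem and
`Δx_{[k]}` is a `Θ`-approximate solution of it, then writing
`S(Δx) := ∑_k G_k^{σ'}(Δx_{[k]}; v_k, x_{[k]})`,
`(σ'/(4τ)) ∑_k ‖A_{[k]} Δx_{[k]}‖² ≤ (1+Θ) (S(0) − S(Δx*))`. -/
theorem cola_update_size_bound
    {d n K : ℕ} (hK : 0 < K) (τ σ' Θ : ℝ)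
    (hτ : 0 < τ) (hσ' : 0 < σ') (hΘ : Θ ∈ Set.Icc (0 : ℝ) 1)
    (A : Matrix (Fin d) (Fin n) ℝ) (P : Fin n → Fin K)
    (f : EuclideanSpace ℝ (Fin d) → ℝ)
    (gradf : EuclideanSpace ℝ (Fin d) → EuclideanSpace ℝ (Fin d))
    (hfconv : ConvexOn ℝ Set.univ f)
    (hgrad : ∀ z, HasGradientAt f (gradf z) z)
    (hsmooth : ∀ u z, f u ≤ f z + ⟪gradf z, u - z⟫ + 1 / (2 * τ) * ‖u - z‖ ^ 2)
    (g : Fin n → ℝ → ℝ) (hg : ∀ i, ConvexOn ℝ Set.univ (g i))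
    (v : Fin K → EuclideanSpace ℝ (Fin d)) (x : EuclideanSpace ℝ (Fin n))
    (Δx Δxstar : Fin K → EuclideanSpace ℝ (Fin n))
    (hmin : ∀ k z, subProb A P f gradf g τ σ' k (v k) x (Δxstar k)
        ≤ subProb A P f gradf g τ σ' k (v k) x z)
    (happrox : ∀ k,
      subProb A P f gradf g τ σ' k (v k) x (Δx k)
          - subProb A P f gradf g τ σ' k (v k) x (Δxstar k)
        ≤ Θ * (subProb A P f gradf g τ σ' k (v k) x 0
          - subProb A P f gradf g τ σ' k (v k) x (Δxstar k))) :
    σ' / (4 * τ) * ∑ k, ‖mulVecE A (restr P k (Δx k))‖ ^ 2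
      ≤ (1 + Θ) * ((∑ k, subProb A P f gradf g τ σ' k (v k) x 0)
          - ∑ k, subProb A P f gradf g τ σ' k (v k) x (Δxstar k)) := by
  set c := σ' / (2 * τ) with hc
  have hc0 : 0 < c := by rw [hc]; positivity
  have hperk : ∀ k, σ' / (4 * τ) * ‖mulVecE A (restr P k (Δx k))‖ ^ 2
      ≤ (1 + Θ) * (subProb A P f gradf g τ σ' k (v k) x 0
          - subProb A P f gradf g τ σ' k (v k) x (Δxstar k)) := by
    intro k
    have h1 := subProb_strong A P f gradf g hg τ σ' hτ hσ' k (v k) x (Δxstar k)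
      (hmin k) (Δx k)
    have h2 := subProb_strong A P f gradf g hg τ σ' hτ hσ' k (v k) x (Δxstar k)
      (hmin k) 0
    rw [L_zero, sub_zero] at h2
    have h1' : c * ‖mulVecE A (restr P k (Δxstar k)) - mulVecE A (restr P k (Δx k))‖ ^ 2
        ≤ Θ * (subProb A P f gradf g τ σ' k (v k) x 0
          - subProb A P f gradf g τ σ' k (v k) x (Δxstar k)) :=
      le_trans h1 (happrox k)
    have h3 : ‖mulVecE A (restr P k (Δx k))‖ ^ 2
        ≤ 2 * ‖mulVecE A (restr P k (Δxstar k)) - mulVecE A (restr P k (Δx k))‖ ^ 2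
          + 2 * ‖mulVecE A (restr P k (Δxstar k))‖ ^ 2 := by
      have htri := norm_sub_le (mulVecE A (restr P k (Δxstar k)))
        (mulVecE A (restr P k (Δxstar k)) - mulVecE A (restr P k (Δx k)))
      rw [sub_sub_cancel] at htri
      have hn1 : (0:ℝ) ≤ ‖mulVecE A (restr P k (Δx k))‖ := norm_nonneg _
      have hn2 : (0:ℝ) ≤ ‖mulVecE A (restr P k (Δxstar k))‖ := norm_nonneg _
      have hn3 : (0:ℝ) ≤ ‖mulVecE A (restr P k (Δxstar k)) - mulVecE A (restr P k (Δx k))‖ :=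
        norm_nonneg _
      nlinarith [htri, sq_nonneg (‖mulVecE A (restr P k (Δxstar k))‖
        - ‖mulVecE A (restr P k (Δxstar k)) - mulVecE A (restr P k (Δx k))‖)]
    have hhalf : σ' / (4 * τ) = c / 2 := by rw [hc]; ring
    rw [hhalf]
    nlinarith [h1', h2, mul_le_mul_of_nonneg_left h3 (le_of_lt hc0)]
  calc σ' / (4 * τ) * ∑ k, ‖mulVecE A (restr P k (Δx k))‖ ^ 2
      = ∑ k, σ' / (4 * τ) * ‖mulVecE A (restr P k (Δx k))‖ ^ 2 := Finset.mul_sum _ _ _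
    _ ≤ ∑ k, (1 + Θ) * (subProb A P f gradf g τ σ' k (v k) x 0
          - subProb A P f gradf g τ σ' k (v k) x (Δxstar k)) :=
        Finset.sum_le_sum fun k _ => hperk k
    _ = (1 + Θ) * ((∑ k, subProb A P f gradf g τ σ' k (v k) x 0)
          - ∑ k, subProb A P f gradf g τ σ' k (v k) x (Δxstar k)) := by
        rw [← Finset.mul_sum, Finset.sum_sub_distrib]
end
end

section
/- Averaging improvement for smooth convex functions: let f : ℝ^d → ℝ be convex and (1/τ)-smooth, let W ∈ ℝ^{K×K} be doubly stochastic with nonnegative entries, and for v_1,…,v_K ∈ ℝ^d set v_k' := Σ_{l=1}^K W_{kl} v_l. Then Σ_{k=1}^K f(v_k) − Σ_{k=1}^K f(v_k') ≥ (τ/2) Σ_{k=1}^K Σ_{l=1}^K W_{kl} ‖∇f(v_l) − ∇f(v_k')‖₂². -/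
open scoped RealInnerProductSpace
open Finset

noncomputable section

lemma grad_ineq {d : ℕ} (f : EuclideanSpace ℝ (Fin d) → ℝ)
    (hconv : ConvexOn ℝ Set.univ f) (x y g : EuclideanSpace ℝ (Fin d))
    (hg : HasGradientAt f g x) : f x + ⟪g, y - x⟫ ≤ f y := by
  have hline : HasDerivAt (fun t : ℝ => x + t • (y - x)) (y - x) 0 := by
    simpa using ((hasDerivAt_id (0:ℝ)).smul_const (y - x)).const_add x
  have hF := hg.hasFDerivAt
  have hderiv : HasDerivAt (fun t : ℝ => f (x + t • (y - x))) ⟪g, y - x⟫ 0 := by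
    have hF' : HasFDerivAt f ((InnerProductSpace.toDual ℝ (EuclideanSpace ℝ (Fin d))) g)
        ((fun t : ℝ => x + t • (y - x)) 0) := by simpa using hF
    have h := hF'.comp_hasDerivAt (0:ℝ) hline
    simp at h
    exact h
  rw [hasDerivAt_iff_tendsto_slope] at hderiv
  have htend : Filter.Tendsto (slope (fun t : ℝ => f (x + t • (y - x))) 0)
      (nhdsWithin 0 (Set.Ioi 0)) (nhds ⟪g, y - x⟫) :=
    hderiv.mono_left (nhdsWithin_mono _ (by intro t ht; exact ne_of_gt ht))
  have hbound : ∀ᶠ t in nhdsWithin (0:ℝ) (Set.Ioi 0),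
      slope (fun t : ℝ => f (x + t • (y - x))) 0 t ≤ f y - f x := by
    filter_upwards [Ioo_mem_nhdsGT_of_mem (Set.left_mem_Ico.2 one_pos)] with t ht
    have ht0 : 0 < t := ht.1
    have ht1 : t < 1 := ht.2
    have hc := hconv.2 (Set.mem_univ x) (Set.mem_univ y)
      (by linarith : (0:ℝ) ≤ 1 - t) (le_of_lt ht0) (by ring)
    have hpt : x + t • (y - x) = (1 - t) • x + t • y := by
      simp [smul_sub, sub_smul]; abel
    simp only [slope_def_field, zero_smul, add_zero, sub_zero]
    rw [div_le_iff₀ ht0, hpt]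
    simp only [smul_eq_mul] at hc
    nlinarith [hc]
  have := le_of_tendsto htend hbound
  linarith

lemma coco {d : ℕ} (τ : ℝ) (hτ : 0 < τ) (f : EuclideanSpace ℝ (Fin d) → ℝ)
    (gradf : EuclideanSpace ℝ (Fin d) → EuclideanSpace ℝ (Fin d))
    (hconv : ConvexOn ℝ Set.univ f)
    (hgrad : ∀ z, HasGradientAt f (gradf z) z)
    (hsmooth : ∀ u z, f u ≤ f z + ⟪gradf z, u - z⟫ + 1 / (2 * τ) * ‖u - z‖ ^ 2)
    (x y : EuclideanSpace ℝ (Fin d)) :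
    f x + ⟪gradf x, y - x⟫ + τ / 2 * ‖gradf y - gradf x‖ ^ 2 ≤ f y := by
  set G := gradf y - gradf x with hG
  set z := y - τ • G with hz
  have h1 := grad_ineq f hconv x z (gradf x) (hgrad x)
  have h2 := hsmooth z y
  have hzy : z - y = -(τ • G) := by rw [hz]; abel
  have hnorm : ‖z - y‖ ^ 2 = τ ^ 2 * ‖G‖ ^ 2 := by
    rw [hzy, norm_neg, norm_smul]
    simp [abs_of_pos hτ, mul_pow]
  have hi2 : ⟪gradf y, z - y⟫ = -(τ * ⟪gradf y, G⟫) := by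
    rw [hzy, inner_neg_right, real_inner_smul_right]
  have hzx : z - x = (y - x) - τ • G := by rw [hz]; abel
  have hi1 : ⟪gradf x, z - x⟫ = ⟪gradf x, y - x⟫ - τ * ⟪gradf x, G⟫ := by
    rw [hzx, inner_sub_right, real_inner_smul_right]
  have hGG : ⟪gradf y, G⟫ - ⟪gradf x, G⟫ = ‖G‖ ^ 2 := by
    rw [← inner_sub_left, ← hG, real_inner_self_eq_norm_sq]
  have hτne : (2 * τ) ≠ 0 := by positivity
  have hdiv : 1 / (2 * τ) * (τ ^ 2 * ‖G‖ ^ 2) = τ / 2 * ‖G‖ ^ 2 := by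
    field_simp
  rw [hi1] at h1
  rw [hi2, hnorm, hdiv] at h2
  nlinarith [h1, h2, hGG]

/-- Averaging improvement for smooth convex functions: let `f` be convex
and `(1/τ)`-smooth, `W` doubly stochastic with nonnegative entries, and
`v_k' := ∑_l W_{kl} v_l`.  Then
`∑_k f(v_k) − ∑_k f(v_k') ≥ (τ/2) ∑_k ∑_l W_{kl} ‖∇f(v_l) − ∇f(v_k')‖²`. -/
theorem averaging_improvement
    {d K : ℕ} (τ : ℝ) (hτ : 0 < τ)
    (W : Matrix (Fin K) (Fin K) ℝ)
    (hWnonneg : ∀ k l, 0 ≤ W k l)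
    (hWrow : ∀ k, ∑ l, W k l = 1) (hWcol : ∀ l, ∑ k, W k l = 1)
    (f : EuclideanSpace ℝ (Fin d) → ℝ)
    (gradf : EuclideanSpace ℝ (Fin d) → EuclideanSpace ℝ (Fin d))
    (hfconv : ConvexOn ℝ Set.univ f)
    (hgrad : ∀ z, HasGradientAt f (gradf z) z)
    (hsmooth : ∀ u z, f u ≤ f z + ⟪gradf z, u - z⟫ + 1 / (2 * τ) * ‖u - z‖ ^ 2)
    (v : Fin K → EuclideanSpace ℝ (Fin d)) :
    τ / 2 * ∑ k, ∑ l, W k l * ‖gradf (v l) - gradf (∑ l', W k l' • v l')‖ ^ 2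
      ≤ ∑ k, f (v k) - ∑ k, f (∑ l, W k l • v l) := by
  set V : Fin K → EuclideanSpace ℝ (Fin d) := fun k => ∑ l, W k l • v l with hV
  have hk : ∀ k, f (V k) + τ / 2 * ∑ l, W k l * ‖gradf (v l) - gradf (V k)‖ ^ 2
      ≤ ∑ l, W k l * f (v l) := by
    intro k
    have hsum : ∑ l, W k l * (f (V k) + ⟪gradf (V k), v l - V k⟫
          + τ / 2 * ‖gradf (v l) - gradf (V k)‖ ^ 2)
        ≤ ∑ l, W k l * f (v l) := by
      refine Finset.sum_le_sum fun l _ => mul_le_mul_of_nonneg_left ?_ (hWnonneg k l)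
      exact coco τ hτ f gradf hfconv hgrad hsmooth (V k) (v l)
    have hinner : ∑ l, W k l * ⟪gradf (V k), v l - V k⟫ = 0 := by
      have : ∑ l, W k l * ⟪gradf (V k), v l - V k⟫
          = ⟪gradf (V k), ∑ l, W k l • (v l - V k)⟫ := by
        rw [inner_sum]
        exact Finset.sum_congr rfl fun l _ => (real_inner_smul_right _ _ _).symm
      rw [this]
      have hzero : ∑ l, W k l • (v l - V k) = 0 := by
        simp only [smul_sub, Finset.sum_sub_distrib, ← Finset.sum_smul, hWrow k, one_smul]
        simp [hV]
      rw [hzero, inner_zero_right]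
    calc f (V k) + τ / 2 * ∑ l, W k l * ‖gradf (v l) - gradf (V k)‖ ^ 2
        = ∑ l, W k l * (f (V k) + ⟪gradf (V k), v l - V k⟫
            + τ / 2 * ‖gradf (v l) - gradf (V k)‖ ^ 2) := by
          simp only [mul_add, Finset.sum_add_distrib, ← Finset.sum_mul, hWrow k, hinner]
          rw [Finset.mul_sum]
          ring_nf
      _ ≤ ∑ l, W k l * f (v l) := hsum
  have hsumk := Finset.sum_le_sum fun k (_ : k ∈ Finset.univ) => hk k
  have hswap : ∑ k, ∑ l, W k l * f (v l) = ∑ k, f (v k) := by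
    rw [Finset.sum_comm]
    calc ∑ l, ∑ k, W k l * f (v l) = ∑ l, (∑ k, W k l) * f (v l) := by
          simp [Finset.sum_mul]
      _ = ∑ l, f (v l) := by simp [hWcol]
  rw [Finset.sum_add_distrib] at hsumk
  have hfac : ∑ k, τ / 2 * ∑ l, W k l * ‖gradf (v l) - gradf (V k)‖ ^ 2
      = τ / 2 * ∑ k, ∑ l, W k l * ‖gradf (v l) - gradf (V k)‖ ^ 2 :=
    (Finset.mul_sum _ _ _).symm
  rw [hfac, hswap] at hsumk
  show τ / 2 * ∑ k, ∑ l, W k l * ‖gradf (v l) - gradf (V k)‖ ^ 2 ≤ ∑ k, f (v k) - ∑ k, f (V k)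
  linarith
end
end

section
/- Strong-convexity gain of the gossip step: let f : ℝ^d → ℝ be μ_f-strongly convex (μ_f ≥ 0) and let W ∈ ℝ^{K×K} be symmetric doubly stochastic with nonnegative entries and β := max{|λ_2(W)|, |λ_K(W)|}. Then for any v_1,…,v_K ∈ ℝ^d with average v̄ := (1/K)Σ_k v_k, (1/K) Σ_{k=1}^K ( f(v_k) − f(Σ_{l=1}^K W_{kl} v_l) ) ≥ (μ_f/(2K)) (1 − β²) Σ_{k=1}^K ‖v_k − v̄‖². -/
open Finset

noncomputable section

lemma euclid_norm_sq {d : ℕ} (x : EuclideanSpace ℝ (Fin d)) :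
    ‖x‖ ^ 2 = ∑ i, (x i) ^ 2 := by
  rw [EuclideanSpace.norm_eq, Real.sq_sqrt (by positivity)]
  simp [sq_abs]

/-- Strong-convexity gain of the gossip step: let `f` be `μ_f`-strongly
convex (`μ_f ≥ 0`) and `W` symmetric doubly stochastic with nonnegative entries and
second-largest eigenvalue magnitude `β` (characterized by the spectral contraction
property of `W − (1/K)𝟙𝟙ᵀ`).  Then for any `v_1, …, v_K` with average `v̄`,
`(1/K) ∑_k (f(v_k) − f(∑_l W_{kl} v_l)) ≥ (μ_f/(2K)) (1 − β²) ∑_k ‖v_k − v̄‖²`. -/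
theorem gossip_strong_convexity_gain
    {d K : ℕ} (hK : 0 < K) (μ : ℝ) (hμ : 0 ≤ μ)
    (W : Matrix (Fin K) (Fin K) ℝ)
    (hWnonneg : ∀ k l, 0 ≤ W k l) (hWsymm : ∀ k l, W k l = W l k)
    (hWrow : ∀ k, ∑ l, W k l = 1) (hWcol : ∀ l, ∑ k, W k l = 1)
    (β : ℝ) (hβ0 : 0 ≤ β)
    (hβ : ∀ z : Fin K → ℝ,
      ∑ k, (∑ l, (W k l - (K : ℝ)⁻¹) * z l) ^ 2 ≤ β ^ 2 * ∑ k, z k ^ 2)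
    (f : EuclideanSpace ℝ (Fin d) → ℝ)
    (hstrong : ConvexOn ℝ Set.univ fun z => f z - μ / 2 * ‖z‖ ^ 2)
    (v : Fin K → EuclideanSpace ℝ (Fin d)) :
    μ / (2 * K) * (1 - β ^ 2) * ∑ k, ‖v k - (K : ℝ)⁻¹ • ∑ l, v l‖ ^ 2
      ≤ (K : ℝ)⁻¹ * ∑ k, (f (v k) - f (∑ l, W k l • v l)) := by
  have hKpos : (0:ℝ) < K := by exact_mod_cast hK
  set vbar : EuclideanSpace ℝ (Fin d) := (K : ℝ)⁻¹ • ∑ l, v l with hvbar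
  set u : Fin K → EuclideanSpace ℝ (Fin d) := fun k => ∑ l, W k l • v l with hu
  set g : EuclideanSpace ℝ (Fin d) → ℝ := fun z => f z - μ / 2 * ‖z‖ ^ 2 with hg
  -- Jensen
  have jensen : ∀ k, g (u k) ≤ ∑ l, W k l * g (v l) := by
    intro k
    exact hstrong.map_sum_le (fun l _ => hWnonneg k l) (hWrow k)
      (fun l _ => Set.mem_univ _)
  have sum_g : ∑ k, g (u k) ≤ ∑ k, g (v k) := by
    calc ∑ k, g (u k) ≤ ∑ k, ∑ l, W k l * g (v l) :=
          Finset.sum_le_sum fun k _ => jensen k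
      _ = ∑ l, (∑ k, W k l) * g (v l) := by
          rw [Finset.sum_comm]; simp [Finset.sum_mul]
      _ = ∑ l, g (v l) := by simp [hWcol]
  -- sums of u equal sums of v
  have sum_u : ∑ k, u k = ∑ l, v l := by
    rw [hu, Finset.sum_comm]
    simp only [← Finset.sum_smul, hWcol, one_smul]
  -- norm identity
  have expand : ∀ x : EuclideanSpace ℝ (Fin d),
      ‖x - vbar‖ ^ 2 = ‖x‖ ^ 2 - 2 * inner ℝ x vbar + ‖vbar‖ ^ 2 :=
    fun x => by rw [norm_sub_sq_real]
  have normid : ∑ k, (‖v k‖ ^ 2 - ‖u k‖ ^ 2)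
      = ∑ k, ‖v k - vbar‖ ^ 2 - ∑ k, ‖u k - vbar‖ ^ 2 := by
    have h1 : ∑ k, ‖v k - vbar‖ ^ 2
        = ∑ k, ‖v k‖ ^ 2 - 2 * inner ℝ (∑ k, v k) vbar + K * ‖vbar‖ ^ 2 := by
      simp only [expand]
      rw [Finset.sum_add_distrib, Finset.sum_sub_distrib, ← Finset.mul_sum,
        ← sum_inner]
      simp [mul_comm]
    have h2 : ∑ k, ‖u k - vbar‖ ^ 2
        = ∑ k, ‖u k‖ ^ 2 - 2 * inner ℝ (∑ k, u k) vbar + K * ‖vbar‖ ^ 2 := by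
      simp only [expand]
      rw [Finset.sum_add_distrib, Finset.sum_sub_distrib, ← Finset.mul_sum,
        ← sum_inner]
      simp [mul_comm]
    rw [Finset.sum_sub_distrib, h1, h2, sum_u]
    ring
  -- spectral bound
  have spectral : ∑ k, ‖u k - vbar‖ ^ 2 ≤ β ^ 2 * ∑ k, ‖v k - vbar‖ ^ 2 := by
    have coord : ∀ k i, (u k - vbar) i = ∑ l, (W k l - (K:ℝ)⁻¹) * ((v l - vbar) i) := by
      intro k i
      have hsum0 : ∑ l, (W k l - (K:ℝ)⁻¹) = 0 := by
        rw [Finset.sum_sub_distrib, hWrow]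
        simp [Finset.card_univ, mul_inv_cancel₀ (ne_of_gt hKpos)]
      have : ∑ l, (W k l - (K:ℝ)⁻¹) * ((v l - vbar) i)
          = ∑ l, (W k l - (K:ℝ)⁻¹) * (v l i) - (∑ l, (W k l - (K:ℝ)⁻¹)) * vbar i := by
        rw [Finset.sum_mul, ← Finset.sum_sub_distrib]
        congr 1; ext l
        simp [PiLp.sub_apply, mul_sub]
      rw [this, hsum0, zero_mul, sub_zero]
      have happly : ∀ (w : Fin K → EuclideanSpace ℝ (Fin d)), (∑ l, w l) i = ∑ l, w l i :=
        fun w => by rw [WithLp.ofLp_sum]; exact Finset.sum_apply i Finset.univ (fun l => (w l).ofLp)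
      have hvbar_i : vbar i = (K:ℝ)⁻¹ * (∑ l, v l i) := by
        rw [hvbar, PiLp.smul_apply, happly, smul_eq_mul]
      have huki : u k i = ∑ l, W k l * v l i := by
        show (∑ l, W k l • v l) i = _
        rw [happly]
        simp [PiLp.smul_apply, smul_eq_mul]
      rw [PiLp.sub_apply, huki, hvbar_i]
      rw [Finset.mul_sum, ← Finset.sum_sub_distrib]
      congr 1; ext l; ring
    calc ∑ k, ‖u k - vbar‖ ^ 2 = ∑ k, ∑ i, ((u k - vbar) i) ^ 2 := by
          simp only [euclid_norm_sq]
      _ = ∑ i, ∑ k, (∑ l, (W k l - (K:ℝ)⁻¹) * ((v l - vbar) i)) ^ 2 := by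
          rw [Finset.sum_comm]
          simp only [coord]
      _ ≤ ∑ i, β ^ 2 * ∑ l, ((v l - vbar) i) ^ 2 :=
          Finset.sum_le_sum fun i _ => hβ (fun l => (v l - vbar) i)
      _ = β ^ 2 * ∑ k, ‖v k - vbar‖ ^ 2 := by
          rw [← Finset.mul_sum, Finset.sum_comm]
          simp only [euclid_norm_sq]
  -- combine
  have key : μ / 2 * (1 - β ^ 2) * ∑ k, ‖v k - vbar‖ ^ 2
      ≤ ∑ k, (f (v k) - f (u k)) := by
    have hfg : ∀ x, f x = g x + μ / 2 * ‖x‖ ^ 2 := fun x => by simp [hg]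
    have split : ∑ k, (f (v k) - f (u k))
        = (∑ k, g (v k) - ∑ k, g (u k)) + μ / 2 * ∑ k, (‖v k‖ ^ 2 - ‖u k‖ ^ 2) := by
      have hterm : ∀ k, f (v k) - f (u k)
          = (g (v k) - g (u k)) + μ / 2 * (‖v k‖ ^ 2 - ‖u k‖ ^ 2) := by
        intro k; simp only [hfg]; ring
      rw [Finset.sum_congr rfl fun k _ => hterm k, Finset.sum_add_distrib,
        Finset.sum_sub_distrib, ← Finset.mul_sum]
    rw [split, normid]
    have hS : 0 ≤ ∑ k, ‖v k - vbar‖ ^ 2 := Finset.sum_nonneg fun k _ => by positivity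
    nlinarith [sum_g, spectral, hS]
  have : μ / (2 * K) * (1 - β ^ 2) * ∑ k, ‖v k - vbar‖ ^ 2
      = (K:ℝ)⁻¹ * (μ / 2 * (1 - β ^ 2) * ∑ k, ‖v k - vbar‖ ^ 2) := by
    simp only [div_eq_mul_inv, mul_inv]; ring
  rw [this]
  exact mul_le_mul_of_nonneg_left key (by positivity)
end
end
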